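/- Let G = Sp(m) be the compact symplectic group (type C_m), realized as the group of m × m quaternionic unitary matrices. Every finite tuple (x₁, …, x_n) of pairwise commuting elements of G can be simultaneously conjugated into a fixed maximal torus of G. -/

import Mathlib

open scoped Quaternion

set_option maxHeartbeats 1000000

open Matrix Quaternion

noncomputable section
open scoped Quaternion
open Matrix Quaternion
set_option maxHeartbeats 1000000
noncomputable section


/-- complex number as a quaternion -/
def cq (c : ℂ) : ℍ[ℝ] := ⟨c.re, c.im, 0, 0⟩

@[simp] lemma cq_re (c : ℂ) : (cq c).re = c.re := rfl
@[simp] lemma cq_imI (c : ℂ) : (cq c).imI = c.im := rfl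
@[simp] lemma cq_imJ (c : ℂ) : (cq c).imJ = 0 := rfl
@[simp] lemma cq_imK (c : ℂ) : (cq c).imK = 0 := rfl

@[simp] lemma cq_one : cq 1 = 1 := by ext <;> simp [cq]
@[simp] lemma cq_zero : cq 0 = 0 := by ext <;> simp [cq]
@[simp] lemma cq_add (c d : ℂ) : cq (c + d) = cq c + cq d := by ext <;> simp
@[simp] lemma cq_mul (c d : ℂ) : cq (c * d) = cq c * cq d := by
  ext <;> simp [Quaternion.re_mul, Quaternion.imI_mul, Quaternion.imJ_mul,
    Quaternion.imK_mul, Complex.mul_re, Complex.mul_im]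

lemma cq_comm (c d : ℂ) : cq c * cq d = cq d * cq c := by
  rw [← cq_mul, ← cq_mul, mul_comm]

@[simp] lemma cq_eq_zero {c : ℂ} : cq c = 0 ↔ c = 0 := by
  constructor
  · intro h
    have hr := congrArg QuaternionAlgebra.re h
    have hi := congrArg QuaternionAlgebra.imI h
    simp at hr hi
    exact Complex.ext hr hi
  · rintro rfl; simp

/-- type synonym of the quaternions carrying the right ℂ-module structure -/
def HQ : Type := ℍ[ℝ]

/-- identity map -/
def HQ.toH : HQ → ℍ[ℝ] := id
/-- identity map -/
def HQ.ofH : ℍ[ℝ] → HQ := id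

@[simp] lemma HQ.toH_ofH (q : ℍ[ℝ]) : (HQ.ofH q).toH = q := rfl
@[simp] lemma HQ.ofH_toH (q : HQ) : HQ.ofH q.toH = q := rfl

instance : AddCommGroup HQ := inferInstanceAs (AddCommGroup ℍ[ℝ])
instance : Nontrivial HQ := inferInstanceAs (Nontrivial ℍ[ℝ])

@[simp] lemma HQ.toH_add (p q : HQ) : (p + q).toH = p.toH + q.toH := rfl
@[simp] lemma HQ.toH_zero : (0 : HQ).toH = 0 := rfl
@[simp] lemma HQ.toH_eq_zero {q : HQ} : q.toH = 0 ↔ q = 0 := Iff.rfl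

instance : SMul ℂ HQ := ⟨fun c q => HQ.ofH (q.toH * cq c)⟩

lemma hq_smul_def (c : ℂ) (q : HQ) : c • q = HQ.ofH (q.toH * cq c) := rfl
@[simp] lemma HQ.toH_smul (c : ℂ) (q : HQ) : (c • q).toH = q.toH * cq c := rfl

instance : Module ℂ HQ where
  one_smul q := by show HQ.ofH (q.toH * cq 1) = q; rw [cq_one, mul_one, HQ.ofH_toH]
  mul_smul c d q := by
    show HQ.ofH (q.toH * cq (c * d)) = HQ.ofH ((q.toH * cq d) * cq c)
    rw [cq_mul, cq_comm, mul_assoc]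
  smul_zero c := by show HQ.ofH ((0:ℍ[ℝ]) * cq c) = 0; rw [zero_mul]; rfl
  smul_add c p q := by
    show HQ.ofH ((p.toH + q.toH) * cq c) = HQ.ofH (p.toH * cq c + q.toH * cq c)
    rw [add_mul]
  add_smul c d q := by
    show HQ.ofH (q.toH * cq (c + d)) = HQ.ofH (q.toH * cq c + q.toH * cq d)
    rw [cq_add, mul_add]
  zero_smul q := by show HQ.ofH (q.toH * cq 0) = 0; rw [cq_zero, mul_zero]; rfl

/-- the quaternion j -/
def jq : ℍ[ℝ] := ⟨0, 0, 1, 0⟩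

instance : Module.Finite ℂ HQ := by
  constructor
  rw [Submodule.fg_def]
  refine ⟨{HQ.ofH 1, HQ.ofH jq}, Set.toFinite _, ?_⟩
  rw [Submodule.eq_top_iff']
  intro q
  have h : q.toH = 1 * cq (Complex.mk q.toH.re q.toH.imI)
      + jq * cq (Complex.mk q.toH.imJ (-q.toH.imK)) := by
    ext <;> simp [Quaternion.re_mul, Quaternion.imI_mul, Quaternion.imJ_mul,
      Quaternion.imK_mul] <;> simp [jq]
  have : (Complex.mk q.toH.re q.toH.imI) • (HQ.ofH 1)
      + (Complex.mk q.toH.imJ (-q.toH.imK)) • (HQ.ofH jq) = q := by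
    conv_rhs => rw [← HQ.ofH_toH q, h]
    rfl
  rw [← this]
  exact Submodule.add_mem _
    (Submodule.smul_mem _ _ (Submodule.subset_span (by simp)))
    (Submodule.smul_mem _ _ (Submodule.subset_span (by simp)))

/-- Common eigenvector for commuting endomorphisms over ℂ. -/
theorem exists_common_eigenvector (n : ℕ) :
    ∀ (V : Type) [AddCommGroup V] [Module ℂ V] [FiniteDimensional ℂ V] [Nontrivial V]
    (f : Fin n → Module.End ℂ V), (∀ i j, Commute (f i) (f j)) →
    ∃ v : V, v ≠ 0 ∧ ∀ i, ∃ c : ℂ, f i v = c • v := by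
  induction n with
  | zero =>
    intro V _ _ _ _ f _
    obtain ⟨v, hv⟩ := exists_ne (0 : V)
    exact ⟨v, hv, fun i => i.elim0⟩
  | succ n ih =>
    intro V _ _ _ _ f hf
    obtain ⟨μ, hμ⟩ := Module.End.exists_eigenvalue (f (Fin.last n))
    set E := Module.End.eigenspace (f (Fin.last n)) μ with hE
    have hEne : Nontrivial E := by
      rw [Submodule.nontrivial_iff_ne_bot]
      exact hμ
    have hmap : ∀ i : Fin n, ∀ x ∈ E, f i.castSucc x ∈ E := by
      intro i x hx
      rw [hE, Module.End.mem_eigenspace_iff] at hx ⊢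
      have := congrArg (fun g : Module.End ℂ V => g x) (hf (Fin.last n) i.castSucc)
      simp only [Module.End.mul_apply] at this
      rw [this, hx, _root_.map_smul]
    set g : Fin n → Module.End ℂ E := fun i => (f i.castSucc).restrict (hmap i) with hg
    have hgc : ∀ i j, Commute (g i) (g j) := by
      intro i j
      ext x
      have := congrArg (fun h : Module.End ℂ V => h x.1) (hf i.castSucc j.castSucc)
      simp only [Module.End.mul_apply] at this
      simpa [hg, Module.End.mul_apply, LinearMap.restrict_apply] using this
    obtain ⟨v, hv0, hv⟩ := ih E g hgc
    refine ⟨v.1, fun h => hv0 (Subtype.ext h), ?_⟩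
    intro i
    refine Fin.lastCases ?_ ?_ i
    · exact ⟨μ, Module.End.mem_eigenspace_iff.mp v.2⟩
    · intro i
      obtain ⟨c, hc⟩ := hv i
      exact ⟨c, congrArg Subtype.val hc⟩


lemma smul_one_h (r : ℝ) : r • (1 : ℍ[ℝ]) = (r : ℍ[ℝ]) := by
  rw [← Quaternion.coe_one, Quaternion.smul_coe, mul_one]

lemma coe_sum {ι : Type*} (s : Finset ι) (f : ι → ℝ) :
    ((∑ i ∈ s, f i : ℝ) : ℍ[ℝ]) = ∑ i ∈ s, ((f i : ℝ) : ℍ[ℝ]) :=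
  map_sum (algebraMap ℝ ℍ[ℝ]) f s

/-- Householder: any unit vector is the first column of some quaternionic unitary matrix. -/
lemma exists_unitary_col {m : ℕ} (u : Fin (m + 1) → ℍ[ℝ])
    (hu : ∑ s, normSq (u s) = 1) :
    ∃ U : Matrix (Fin (m + 1)) (Fin (m + 1)) ℍ[ℝ],
      star U * U = 1 ∧ U * star U = 1 ∧ ∀ s, U s 0 = u s := by
  classical
  -- the unit complex-phase quaternion `q`
  set q : ℍ[ℝ] := if u 0 = 0 then 1 else (‖u 0‖⁻¹ : ℝ) • u 0 with hqdef
  have hq3 : star q * u 0 = ((‖u 0‖ : ℝ) : ℍ[ℝ]) := by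
    by_cases h : u 0 = 0
    · simp [hqdef, h]
    · calc star q * u 0 = ‖u 0‖⁻¹ • (star (u 0) * u 0) := by
            rw [hqdef, if_neg h, Quaternion.star_smul, smul_mul_assoc]
      _ = ‖u 0‖⁻¹ • ((normSq (u 0) : ℝ) : ℍ[ℝ]) := by rw [star_mul_self]
      _ = ((‖u 0‖⁻¹ * normSq (u 0) : ℝ) : ℍ[ℝ]) := smul_coe _ _
      _ = ((‖u 0‖ : ℝ) : ℍ[ℝ]) := by
            rw [Quaternion.coe_inj, normSq_eq_norm_mul_self]
            field_simp
  have hq1 : star q * q = 1 := by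
    by_cases h : u 0 = 0
    · simp [hqdef, h]
    · calc star q * q = ‖u 0‖⁻¹ • (star q * u 0) := by
            rw [hqdef, if_neg h, mul_smul_comm]
      _ = ((‖u 0‖⁻¹ * ‖u 0‖ : ℝ) : ℍ[ℝ]) := by rw [hq3, smul_coe]
      _ = 1 := by rw [inv_mul_cancel₀ (norm_ne_zero_iff.mpr h)]; simp
  have hq2 : q * star q = 1 := by
    have hnq : normSq q = 1 :=
      Quaternion.coe_injective (by rw [← star_mul_self, hq1, coe_one])
    rw [self_mul_star, hnq]; simp
  have hq3' : star (u 0) * q = ((‖u 0‖ : ℝ) : ℍ[ℝ]) := by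
    have := congrArg star hq3
    rwa [StarMul.star_mul, star_star, star_coe] at this
  -- the diagonal phase matrix
  set d : Fin (m + 1) → ℍ[ℝ] := fun s => if s = 0 then q else 1 with hddef
  set D : Matrix (Fin (m + 1)) (Fin (m + 1)) ℍ[ℝ] := Matrix.diagonal d with hDdef
  have hDl : star D * D = 1 := by
    rw [hDdef, Matrix.star_eq_conjTranspose, Matrix.diagonal_conjTranspose,
      Matrix.diagonal_mul_diagonal]
    refine Matrix.ext fun s t => ?_
    rcases eq_or_ne s t with rfl | hst
    · rw [Matrix.diagonal_apply_eq, Matrix.one_apply_eq]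
      by_cases h : s = 0 <;> simp [hddef, h, hq1]
    · rw [Matrix.diagonal_apply_ne _ hst, Matrix.one_apply_ne hst]
  have hDr : D * star D = 1 := by
    rw [hDdef, Matrix.star_eq_conjTranspose, Matrix.diagonal_conjTranspose,
      Matrix.diagonal_mul_diagonal]
    refine Matrix.ext fun s t => ?_
    rcases eq_or_ne s t with rfl | hst
    · rw [Matrix.diagonal_apply_eq, Matrix.one_apply_eq]
      by_cases h : s = 0 <;> simp [hddef, h, hq2]
    · rw [Matrix.diagonal_apply_ne _ hst, Matrix.one_apply_ne hst]
  -- the vector w = u - e'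
  set e : Fin (m + 1) → ℍ[ℝ] := fun s => if s = 0 then q else 0 with hedef
  have hD0 : ∀ s, D s 0 = e s := by
    intro s
    by_cases h : s = 0 <;> simp [hDdef, Matrix.diagonal_apply, hddef, hedef, h]
  set w : Fin (m + 1) → ℍ[ℝ] := fun s => u s - e s with hwdef
  by_cases hw : ∀ s, w s = 0
  · -- u is already e₀ · q : take U = D
    refine ⟨D, hDl, hDr, fun s => ?_⟩
    have hws := hw s
    rw [hwdef, sub_eq_zero] at hws
    rw [hD0 s]; exact hws.symm
  · push_neg at hw
    obtain ⟨s₀, hs₀⟩ := hw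
    set δ : ℝ := ∑ s, normSq (w s) with hδdef
    have hδpos : 0 < δ := by
      have h1 : 0 < normSq (w s₀) := by
        rcases lt_or_eq_of_le (normSq_nonneg (a := w s₀)) with h | h
        · exact h
        · exact absurd (normSq_eq_zero.mp h.symm) hs₀
      have h2 : normSq (w s₀) ≤ δ := by
        rw [hδdef]
        exact Finset.single_le_sum (f := fun i => normSq (w i)) (fun i _ => normSq_nonneg) (Finset.mem_univ s₀)
      linarith
    -- column matrices
    set W : Matrix (Fin (m + 1)) (Fin 1) ℍ[ℝ] := Matrix.of (fun s _ => w s) with hWdef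
    set Uc : Matrix (Fin (m + 1)) (Fin 1) ℍ[ℝ] := Matrix.of (fun s _ => u s) with hUcdef
    set E : Matrix (Fin (m + 1)) (Fin 1) ℍ[ℝ] := Matrix.of (fun s _ => e s) with hEdef
    have hWUE : W = Uc - E := by
      refine Matrix.ext fun s t => ?_; simp [hWdef, hUcdef, hEdef, hwdef]
    have hWW : Wᴴ * W = δ • 1 := by
      refine Matrix.ext fun i j => ?_
      rw [Subsingleton.elim i 0, Subsingleton.elim j 0]
      rw [Matrix.mul_apply]
      simp only [hWdef, Matrix.conjTranspose_apply, Matrix.of_apply]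
      rw [Matrix.smul_apply, Matrix.one_apply_eq]
      calc ∑ s, star (w s) * w s = ∑ s, ((normSq (w s) : ℝ) : ℍ[ℝ]) := by
            exact Finset.sum_congr rfl fun s _ => star_mul_self (w s)
      _ = ((δ : ℝ) : ℍ[ℝ]) := by rw [hδdef, coe_sum]
      _ = δ • (1 : ℍ[ℝ]) := (smul_one_h δ).symm
    have hWU : Wᴴ * Uc = (1 - ‖u 0‖ : ℝ) • 1 := by
      refine Matrix.ext fun i j => ?_
      rw [Subsingleton.elim i 0, Subsingleton.elim j 0]
      rw [Matrix.mul_apply]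
      simp only [hWdef, hUcdef, Matrix.conjTranspose_apply, Matrix.of_apply]
      rw [Matrix.smul_apply, Matrix.one_apply_eq]
      have : ∀ s, star (w s) * u s = star (u s) * u s - star (e s) * u s := by
        intro s
        have : w s = u s - e s := by simp [hwdef]
        rw [this, star_sub, sub_mul]
      rw [Finset.sum_congr rfl fun s _ => this s, Finset.sum_sub_distrib]
      have h1 : ∑ s, star (u s) * u s = ((1 : ℝ) : ℍ[ℝ]) := by
        rw [Finset.sum_congr rfl fun s _ => star_mul_self (u s), ← coe_sum, hu]
      have h2 : ∑ s, star (e s) * u s = ((‖u 0‖ : ℝ) : ℍ[ℝ]) := by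
        rw [← hq3]
        rw [Finset.sum_eq_single 0]
        · simp [hedef]
        · intro b _ hb; simp [hedef, hb]
        · simp
      rw [h1, h2, smul_one_h]
      exact (Quaternion.coe_sub _ _).symm
    have hWE : Wᴴ * E = (‖u 0‖ - 1 : ℝ) • 1 := by
      refine Matrix.ext fun i j => ?_
      rw [Subsingleton.elim i 0, Subsingleton.elim j 0]
      rw [Matrix.mul_apply]
      simp only [hWdef, hEdef, Matrix.conjTranspose_apply, Matrix.of_apply]
      rw [Matrix.smul_apply, Matrix.one_apply_eq]
      have h2 : ∑ s, star (w s) * e s = star (w 0) * q := by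
        rw [Finset.sum_eq_single 0]
        · simp [hedef]
        · intro b _ hb; simp [hedef, hb]
        · simp
      rw [h2]
      have : star (w 0) * q = star (u 0) * q - star q * q := by
        have hw0 : w 0 = u 0 - q := by simp [hwdef, hedef]
        rw [hw0, star_sub, sub_mul]
      rw [this, hq3', hq1, smul_one_h]
      have : ((‖u 0‖ : ℝ) : ℍ[ℝ]) - 1 = ((‖u 0‖ - 1 : ℝ) : ℍ[ℝ]) := by
        rw [Quaternion.coe_sub, Quaternion.coe_one]
      rw [this]
    have hδeq : δ = 2 * (1 - ‖u 0‖) := by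
      have : Wᴴ * W = Wᴴ * Uc - Wᴴ * E := by rw [hWUE, Matrix.mul_sub]
      rw [hWW, hWU, hWE] at this
      have h00 := congrArg (fun M : Matrix (Fin 1) (Fin 1) ℍ[ℝ] => M 0 0) this
      simp only [Matrix.sub_apply, Matrix.smul_apply, Matrix.one_apply_eq] at h00
      rw [smul_one_h, smul_one_h, smul_one_h, ← Quaternion.coe_sub, Quaternion.coe_inj] at h00
      linarith
    -- the Householder reflection
    set c : ℝ := 2 / δ with hcdef
    set K : Matrix (Fin (m + 1)) (Fin (m + 1)) ℍ[ℝ] := W * Wᴴ with hKdef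
    set H : Matrix (Fin (m + 1)) (Fin (m + 1)) ℍ[ℝ] := 1 - c • K with hHdef
    have hKH : Kᴴ = K := by rw [hKdef, Matrix.conjTranspose_mul, Matrix.conjTranspose_conjTranspose]
    have hK2 : K * K = δ • K := by
      rw [hKdef, Matrix.mul_assoc, ← Matrix.mul_assoc Wᴴ, hWW, Matrix.smul_mul,
        Matrix.one_mul, Matrix.mul_smul]
    have hH2 : H * H = 1 := by
      have hsc : c * c * δ = c + c := by
        rw [hcdef]; field_simp; ring
      have e1 : (c • K) * (c • K) = (c + c) • K := by
        rw [Matrix.smul_mul, Matrix.mul_smul, smul_smul, hK2, smul_smul, hsc]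
      have expand : ∀ X : Matrix (Fin (m+1)) (Fin (m+1)) ℍ[ℝ], (1 - X) * (1 - X)
          = 1 - X - X + X * X := by intro X; noncomm_ring
      rw [hHdef, expand, e1, add_smul]
      abel
    have hHH : Hᴴ = H := by
      have hcK : (c • K)ᴴ = c • Kᴴ := by
        refine Matrix.ext fun s t => ?_
        simp [Matrix.conjTranspose_apply, Quaternion.star_smul]
      rw [hHdef, Matrix.conjTranspose_sub, Matrix.conjTranspose_one, hcK, hKH]
    have h1u : (1 : ℝ) - ‖u 0‖ ≠ 0 := by
      intro h
      rw [hδeq, h] at hδpos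
      simp at hδpos
    have hHU : H * Uc = E := by
      rw [hHdef, Matrix.sub_mul, Matrix.one_mul, Matrix.smul_mul, hKdef, Matrix.mul_assoc,
        hWU, Matrix.mul_smul, Matrix.mul_one, smul_smul]
      have : c * (1 - ‖u 0‖) = 1 := by
        rw [hcdef, hδeq]; field_simp
      rw [this, one_smul, hWUE]
      abel
    have hHE : H * E = Uc := by
      rw [← hHU, ← Matrix.mul_assoc, hH2, Matrix.one_mul]
    have hsH : star H = H := by rw [Matrix.star_eq_conjTranspose, hHH]
    have hsD : star (H * D) = star D * star H := Matrix.star_mul H D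
    refine ⟨H * D, ?_, ?_, ?_⟩
    · rw [hsD, Matrix.mul_assoc, ← Matrix.mul_assoc (star H), hsH, hH2, Matrix.one_mul, hDl]
    · rw [hsD, hsH, ← Matrix.mul_assoc, Matrix.mul_assoc H, hDr, mul_one, hH2]
    · intro s
      have : (H * D) s 0 = (H * E) s 0 := by
        rw [Matrix.mul_apply, Matrix.mul_apply]
        exact Finset.sum_congr rfl fun t _ => by rw [hD0 t, hEdef]; rfl
      rw [this, hHE, hUcdef]
      rfl
@[simp] lemma HQ.ofH_add (a b : ℍ[ℝ]) : HQ.ofH (a + b) = HQ.ofH a + HQ.ofH b := rfl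

/-- the ℂ-linear endomorphism of `Fin m → HQ` given by a quaternionic matrix -/
def matEnd {m : ℕ} (A : Matrix (Fin m) (Fin m) ℍ[ℝ]) : Module.End ℂ (Fin m → HQ) where
  toFun v := fun s => HQ.ofH (∑ t, A s t * (v t).toH)
  map_add' v w := by
    funext s
    simp only [Pi.add_apply, HQ.toH_add, mul_add, Finset.sum_add_distrib, HQ.ofH_add]
  map_smul' c v := by
    funext s
    show HQ.ofH (∑ t, A s t * ((c • v) t).toH) = HQ.ofH ((∑ t, A s t * (v t).toH) * cq c)
    rw [Finset.sum_mul]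
    congr 1
    refine Finset.sum_congr rfl fun t _ => ?_
    show A s t * ((v t).toH * cq c) = A s t * (v t).toH * cq c
    rw [mul_assoc]

lemma matEnd_mul {m : ℕ} (A B : Matrix (Fin m) (Fin m) ℍ[ℝ]) :
    matEnd (A * B) = matEnd A * matEnd B := by
  refine LinearMap.ext fun v => ?_
  funext s
  show HQ.ofH (∑ t, (A * B) s t * (v t).toH)
      = HQ.ofH (∑ r, A s r * ((matEnd B v) r).toH)
  congr 1
  have : ∀ r, A s r * ((matEnd B v) r).toH = A s r * (∑ t, B r t * (v t).toH) := fun r => rfl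
  rw [Finset.sum_congr rfl fun r _ => this r]
  simp only [Matrix.mul_apply, Finset.sum_mul, Finset.mul_sum, mul_assoc]
  rw [Finset.sum_comm]

lemma exists_common_unit_eigenvector {m n : ℕ}
    (A : Fin n → Matrix (Fin (m + 1)) (Fin (m + 1)) ℍ[ℝ])
    (hcomm : ∀ i j, A i * A j = A j * A i) :
    ∃ u : Fin (m + 1) → ℍ[ℝ], (∑ s, normSq (u s) = 1) ∧
      ∀ i, ∃ c : ℂ, ∀ s, ∑ t, A i s t * u t = u s * cq c := by
  classical
  have hnt : Nontrivial (Fin (m + 1) → HQ) := by infer_instance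
  obtain ⟨v, hv0, hv⟩ := exists_common_eigenvector n (Fin (m + 1) → HQ)
    (fun i => matEnd (A i))
    (fun i j => by
      unfold Commute SemiconjBy
      rw [← matEnd_mul, ← matEnd_mul, hcomm])
  -- underlying quaternionic vector
  set vq : Fin (m + 1) → ℍ[ℝ] := fun s => (v s).toH with hvqdef
  have hvq : ∀ i, ∃ c : ℂ, ∀ s, ∑ t, A i s t * vq t = vq s * cq c := by
    intro i
    obtain ⟨c, hc⟩ := hv i
    refine ⟨c, fun s => ?_⟩
    have := congrArg (fun z => (z s).toH) hc
    simpa [matEnd, hvqdef] using this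
  set r : ℝ := ∑ s, normSq (vq s) with hrdef
  have hrpos : 0 < r := by
    have hex : ∃ s, vq s ≠ 0 := by
      by_contra h
      push_neg at h
      apply hv0
      funext s
      have := h s
      rw [hvqdef] at this
      exact HQ.toH_eq_zero.mp this
    obtain ⟨s₀, hs₀⟩ := hex
    have h1 : 0 < normSq (vq s₀) := by
      rcases lt_or_eq_of_le (normSq_nonneg (a := vq s₀)) with h | h
      · exact h
      · exact absurd (normSq_eq_zero.mp h.symm) hs₀
    have h2 : normSq (vq s₀) ≤ r := by
      rw [hrdef]
      exact Finset.single_le_sum (f := fun i => normSq (vq i))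
        (fun i _ => normSq_nonneg) (Finset.mem_univ s₀)
    linarith
  set ρ : ℝ := (Real.sqrt r)⁻¹ with hρdef
  have hρ : ρ * ρ * r = 1 := by
    rw [hρdef]
    rw [← mul_inv]
    rw [Real.mul_self_sqrt hrpos.le]
    exact inv_mul_cancel₀ hrpos.ne'
  refine ⟨fun s => ρ • vq s, ?_, ?_⟩
  · have : ∀ s, normSq (ρ • vq s) = ρ * ρ * normSq (vq s) := by
      intro s
      rw [← coe_mul_eq_smul, _root_.map_mul, normSq_coe]
      ring
    rw [Finset.sum_congr rfl fun s _ => this s, ← Finset.mul_sum, ← hrdef, hρ]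
  · intro i
    obtain ⟨c, hc⟩ := hvq i
    refine ⟨c, fun s => ?_⟩
    calc ∑ t, A i s t * ρ • vq t = ρ • ∑ t, A i s t * vq t := by
          rw [Finset.smul_sum]
          exact Finset.sum_congr rfl fun t _ => mul_smul_comm ρ _ _
    _ = ρ • (vq s * cq c) := by rw [hc s]
    _ = (ρ • vq s) * cq c := (smul_mul_assoc ρ _ _).symm

/-- extend an `m × m` matrix to an `(m+1) × (m+1)` matrix by a `1` in the upper-left corner -/
def blockExt {m : ℕ} (V : Matrix (Fin m) (Fin m) ℍ[ℝ]) :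
    Matrix (Fin (m + 1)) (Fin (m + 1)) ℍ[ℝ] :=
  Matrix.of fun s t =>
    Fin.cases (Fin.cases 1 (fun _ => 0) t) (fun s' => Fin.cases 0 (fun t' => V s' t') t) s

@[simp] lemma blockExt_zero_zero {m : ℕ} (V : Matrix (Fin m) (Fin m) ℍ[ℝ]) :
    blockExt V 0 0 = 1 := rfl
@[simp] lemma blockExt_zero_succ {m : ℕ} (V : Matrix (Fin m) (Fin m) ℍ[ℝ]) (t : Fin m) :
    blockExt V 0 t.succ = 0 := by simp [blockExt]
@[simp] lemma blockExt_succ_zero {m : ℕ} (V : Matrix (Fin m) (Fin m) ℍ[ℝ]) (s : Fin m) :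
    blockExt V s.succ 0 = 0 := by simp [blockExt]
@[simp] lemma blockExt_succ_succ {m : ℕ} (V : Matrix (Fin m) (Fin m) ℍ[ℝ]) (s t : Fin m) :
    blockExt V s.succ t.succ = V s t := by simp [blockExt]

lemma blockExt_star {m : ℕ} (V : Matrix (Fin m) (Fin m) ℍ[ℝ]) :
    star (blockExt V) = blockExt (star V) := by
  refine Matrix.ext fun s t => ?_
  rw [Matrix.star_apply]
  induction s using Fin.cases with
  | zero =>
    induction t using Fin.cases with
    | zero => simp
    | succ t => simp
  | succ s =>
    induction t using Fin.cases with
    | zero => simp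
    | succ t => simp [Matrix.star_apply]

lemma blockExt_mul {m : ℕ} (X Y : Matrix (Fin m) (Fin m) ℍ[ℝ]) :
    blockExt X * blockExt Y = blockExt (X * Y) := by
  refine Matrix.ext fun s t => ?_
  rw [Matrix.mul_apply, Fin.sum_univ_succ]
  induction s using Fin.cases with
  | zero =>
    induction t using Fin.cases with
    | zero => simp
    | succ t => simp
  | succ s =>
    induction t using Fin.cases with
    | zero => simp
    | succ t => simp [Matrix.mul_apply]

lemma blockExt_one {m : ℕ} : blockExt (1 : Matrix (Fin m) (Fin m) ℍ[ℝ]) = 1 := by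
  refine Matrix.ext fun s t => ?_
  induction s using Fin.cases with
  | zero =>
    induction t using Fin.cases with
    | zero => simp
    | succ t => simp [Matrix.one_apply, (Fin.succ_ne_zero t).symm]
  | succ s =>
    induction t using Fin.cases with
    | zero => simp [Matrix.one_apply, Fin.succ_ne_zero s]
    | succ t => simp [Matrix.one_apply, Fin.succ_inj]

lemma diag_entry_norm {m : ℕ} (M : Matrix (Fin m) (Fin m) ℍ[ℝ])
    (hM : star M * M = 1) (hd : M.IsDiag) (p : Fin m) : ‖M p p‖ = 1 := by
  have h := congrArg (fun X : Matrix (Fin m) (Fin m) ℍ[ℝ] => X p p) hM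
  simp only [Matrix.mul_apply, Matrix.one_apply_eq, Matrix.star_apply] at h
  rw [Finset.sum_eq_single p] at h
  · rw [star_mul_self] at h
    have h2 : normSq (M p p) = 1 := by rw [← Quaternion.coe_inj, h, coe_one]
    have h3 : ‖M p p‖ * ‖M p p‖ = 1 := by rw [← normSq_eq_norm_mul_self, h2]
    nlinarith [norm_nonneg (M p p)]
  · intro b _ hb
    rw [hd hb, star_zero, zero_mul]
  · simp

/-- main induction: commuting quaternionic unitaries are simultaneously diagonalizable
with complex diagonal entries -/
theorem main_diag (n : ℕ) : ∀ (m : ℕ) (A : Fin n → Matrix (Fin m) (Fin m) ℍ[ℝ]),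
    (∀ i, star (A i) * A i = 1) → (∀ i, A i * star (A i) = 1) →
    (∀ i j, A i * A j = A j * A i) →
    ∃ U : Matrix (Fin m) (Fin m) ℍ[ℝ], star U * U = 1 ∧ U * star U = 1 ∧
      ∀ i, (star U * A i * U).IsDiag ∧
        ∀ p, ((star U * A i * U) p p).imJ = 0 ∧ ((star U * A i * U) p p).imK = 0 := by
  intro m
  induction m with
  | zero =>
    intro A _ _ _
    refine ⟨1, by simp, by simp, fun i => ⟨fun p q _ => p.elim0, fun p => p.elim0⟩⟩
  | succ m IH =>
    intro A hAl hAr hAcomm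
    obtain ⟨u, hu, heig⟩ := exists_common_unit_eigenvector A hAcomm
    choose l hl using heig
    obtain ⟨U₁, hU₁l, hU₁r, hU₁col⟩ := exists_unitary_col u hu
    set C : Fin n → Matrix (Fin (m + 1)) (Fin (m + 1)) ℍ[ℝ] :=
      fun i => star U₁ * A i * U₁ with hCdef
    have hCstar : ∀ i, star (C i) = star U₁ * star (A i) * U₁ := by
      intro i
      simp only [hCdef]
      rw [Matrix.star_mul, Matrix.star_mul, star_star, Matrix.mul_assoc]
    have hU₁Vl : ∀ X : Matrix (Fin (m + 1)) (Fin (m + 1)) ℍ[ℝ],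
        star U₁ * (U₁ * X) = X := by
      intro X; rw [← Matrix.mul_assoc, hU₁l, Matrix.one_mul]
    have hU₁Vr : ∀ X : Matrix (Fin (m + 1)) (Fin (m + 1)) ℍ[ℝ],
        U₁ * (star U₁ * X) = X := by
      intro X; rw [← Matrix.mul_assoc, hU₁r, Matrix.one_mul]
    have hconj_mul : ∀ X Y : Matrix (Fin (m + 1)) (Fin (m + 1)) ℍ[ℝ],
        (star U₁ * X * U₁) * (star U₁ * Y * U₁) = star U₁ * (X * Y) * U₁ := by
      intro X Y
      simp only [Matrix.mul_assoc]
      rw [hU₁Vr]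
    have hCl : ∀ i, star (C i) * C i = 1 := by
      intro i
      rw [hCstar]; simp only [hCdef]; rw [hconj_mul, hAl, Matrix.mul_one, hU₁l]
    have hCr : ∀ i, C i * star (C i) = 1 := by
      intro i
      rw [hCstar]; simp only [hCdef]; rw [hconj_mul, hAr, Matrix.mul_one, hU₁l]
    have hCcomm : ∀ i j, C i * C j = C j * C i := by
      intro i j
      simp only [hCdef]; rw [hconj_mul, hconj_mul, hAcomm]
    have hCcol : ∀ i s, C i s 0 = if s = 0 then cq (l i) else 0 := by
      intro i s
      have h1 : C i s 0 = ∑ r, (star U₁) s r * ((A i * U₁) r 0) := by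
        simp only [hCdef]; rw [Matrix.mul_assoc, Matrix.mul_apply]
      have h2 : ∀ r, (A i * U₁) r 0 = u r * cq (l i) := by
        intro r
        rw [Matrix.mul_apply, Finset.sum_congr rfl fun t _ => by rw [hU₁col t], hl i r]
      rw [h1, Finset.sum_congr rfl fun r _ => by rw [h2 r]]
      have h3 : ∑ r, (star U₁) s r * (u r * cq (l i))
          = (∑ r, (star U₁) s r * U₁ r 0) * cq (l i) := by
        rw [Finset.sum_mul]
        exact Finset.sum_congr rfl fun r _ => by rw [hU₁col r, mul_assoc]
      rw [h3, ← Matrix.mul_apply, hU₁l]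
      by_cases hs : s = 0 <;> simp [Matrix.one_apply, hs]
    have hlam : ∀ i, star (cq (l i)) * cq (l i) = 1 := by
      intro i
      have h := congrArg (fun X : Matrix (Fin (m + 1)) (Fin (m + 1)) ℍ[ℝ] => X 0 0) (hCl i)
      simp only [Matrix.mul_apply, Matrix.one_apply_eq, Matrix.star_apply] at h
      rw [Finset.sum_eq_single 0] at h
      · rw [hCcol i 0, if_pos rfl] at h
        exact h
      · intro b _ hb
        rw [hCcol i b, if_neg hb, star_zero, zero_mul]
      · simp
    have hlam' : ∀ i, cq (l i) * star (cq (l i)) = 1 := by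
      intro i
      have h2 : normSq (cq (l i)) = 1 := by
        rw [← Quaternion.coe_inj, ← star_mul_self, hlam i, coe_one]
      rw [self_mul_star, h2, coe_one]
    have hCrow : ∀ i (t : Fin m), C i 0 t.succ = 0 := by
      intro i t
      have h := congrArg (fun X : Matrix (Fin (m + 1)) (Fin (m + 1)) ℍ[ℝ] => X 0 t.succ) (hCl i)
      simp only [Matrix.mul_apply, Matrix.star_apply] at h
      rw [Finset.sum_eq_single 0] at h
      · rw [hCcol i 0, if_pos rfl, Matrix.one_apply_ne (Fin.succ_ne_zero t).symm] at h
        calc C i 0 t.succ = (cq (l i) * star (cq (l i))) * C i 0 t.succ := by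
              rw [hlam' i, one_mul]
        _ = cq (l i) * (star (cq (l i)) * C i 0 t.succ) := by rw [mul_assoc]
        _ = 0 := by rw [h, mul_zero]
      · intro b _ hb
        rw [hCcol i b, if_neg hb, star_zero, zero_mul]
      · simp
    set C' : Fin n → Matrix (Fin m) (Fin m) ℍ[ℝ] :=
      fun i => (C i).submatrix Fin.succ Fin.succ with hC'def
    have hC'app : ∀ i s t, C' i s t = C i s.succ t.succ := fun i s t => rfl
    have hC'l : ∀ i, star (C' i) * C' i = 1 := by
      intro i
      refine Matrix.ext fun s t => ?_
      have h := congrArg (fun X : Matrix (Fin (m + 1)) (Fin (m + 1)) ℍ[ℝ]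
        => X s.succ t.succ) (hCl i)
      simp only [Matrix.mul_apply, Matrix.star_apply] at h
      rw [Fin.sum_univ_succ, hCrow i t, mul_zero, zero_add] at h
      rw [Matrix.mul_apply]
      simp only [Matrix.star_apply, hC'app]
      rw [h]
      simp [Matrix.one_apply, Fin.succ_inj]
    have hC'r : ∀ i, C' i * star (C' i) = 1 := by
      intro i
      refine Matrix.ext fun s t => ?_
      have h := congrArg (fun X : Matrix (Fin (m + 1)) (Fin (m + 1)) ℍ[ℝ]
        => X s.succ t.succ) (hCr i)
      simp only [Matrix.mul_apply, Matrix.star_apply] at h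
      rw [Fin.sum_univ_succ, hCcol i s.succ, if_neg (Fin.succ_ne_zero s), zero_mul,
        zero_add] at h
      rw [Matrix.mul_apply]
      simp only [Matrix.star_apply, hC'app]
      rw [h]
      simp [Matrix.one_apply, Fin.succ_inj]
    have hC'comm : ∀ i j, C' i * C' j = C' j * C' i := by
      have key : ∀ i j (s t : Fin m), (C' i * C' j) s t = (C i * C j) s.succ t.succ := by
        intro i j s t
        rw [Matrix.mul_apply, Matrix.mul_apply, Fin.sum_univ_succ,
          hCcol i s.succ, if_neg (Fin.succ_ne_zero s), zero_mul, zero_add]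
        simp only [hC'app]
      intro i j
      refine Matrix.ext fun s t => ?_
      rw [key, key, hCcomm]
    obtain ⟨V', hV'l, hV'r, hV'diag⟩ := IH C' hC'l hC'r hC'comm
    set V : Matrix (Fin (m + 1)) (Fin (m + 1)) ℍ[ℝ] := blockExt V' with hVdef
    have hVl : star V * V = 1 := by
      rw [hVdef, blockExt_star, blockExt_mul, hV'l, blockExt_one]
    have hVr : V * star V = 1 := by
      rw [hVdef, blockExt_star, blockExt_mul, hV'r, blockExt_one]
    refine ⟨U₁ * V, ?_, ?_, ?_⟩
    · rw [Matrix.star_mul, Matrix.mul_assoc, hU₁Vl, hVl]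
    · rw [Matrix.star_mul, Matrix.mul_assoc, ← Matrix.mul_assoc V, hVr, Matrix.one_mul, hU₁r]
    · intro i
      have hM : star (U₁ * V) * A i * (U₁ * V) = star V * (C i * V) := by
        simp only [hCdef, Matrix.star_mul, Matrix.mul_assoc]
      -- entry lemmas for V
      have hV00 : V 0 0 = 1 := by rw [hVdef]; exact blockExt_zero_zero V'
      have hV0s : ∀ t : Fin m, V 0 t.succ = 0 := by
        intro t; rw [hVdef]; exact blockExt_zero_succ V' t
      have hVs0 : ∀ s : Fin m, V s.succ 0 = 0 := by
        intro s; rw [hVdef]; exact blockExt_succ_zero V' s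
      have hVss : ∀ s t : Fin m, V s.succ t.succ = V' s t := by
        intro s t; rw [hVdef]; exact blockExt_succ_succ V' s t
      -- entries of N := C i * V
      have hN0 : ∀ s, (C i * V) s 0 = C i s 0 := by
        intro s
        rw [Matrix.mul_apply, Fin.sum_univ_succ, hV00, mul_one]
        rw [Finset.sum_eq_zero fun r _ => by rw [hVs0 r, mul_zero], add_zero]
      have hNs : ∀ t : Fin m, (C i * V) 0 t.succ = 0 := by
        intro t
        rw [Matrix.mul_apply, Fin.sum_univ_succ, hV0s t, mul_zero, zero_add]
        exact Finset.sum_eq_zero fun r _ => by rw [hCrow i r, zero_mul]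
      have hNss : ∀ s t : Fin m, (C i * V) s.succ t.succ = (C' i * V') s t := by
        intro s t
        rw [Matrix.mul_apply, Fin.sum_univ_succ, hV0s t, mul_zero, zero_add,
          Matrix.mul_apply]
        exact Finset.sum_congr rfl fun r _ => by rw [hVss, hC'app]
      -- entries of M := star V * (C i * V)
      have hM00 : (star V * (C i * V)) 0 0 = cq (l i) := by
        rw [Matrix.mul_apply, Fin.sum_univ_succ, Matrix.star_apply, hV00, star_one,
          one_mul, hN0, hCcol i 0, if_pos rfl]
        rw [Finset.sum_eq_zero fun r _ => by
          rw [Matrix.star_apply, hVs0 r, star_zero, zero_mul], add_zero]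
      have hM0t : ∀ t : Fin m, (star V * (C i * V)) 0 t.succ = 0 := by
        intro t
        rw [Matrix.mul_apply, Fin.sum_univ_succ, Matrix.star_apply, hV00, star_one,
          one_mul, hNs t]
        rw [Finset.sum_eq_zero fun r _ => by
          rw [Matrix.star_apply, hVs0 r, star_zero, zero_mul], zero_add]
      have hMs0 : ∀ s : Fin m, (star V * (C i * V)) s.succ 0 = 0 := by
        intro s
        rw [Matrix.mul_apply, Fin.sum_univ_succ, Matrix.star_apply, hV0s s, star_zero,
          zero_mul, zero_add]
        refine Finset.sum_eq_zero fun r _ => ?_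
        rw [hN0, hCcol i r.succ, if_neg (Fin.succ_ne_zero r), mul_zero]
      have hMss : ∀ s t : Fin m, (star V * (C i * V)) s.succ t.succ
          = (star V' * C' i * V') s t := by
        intro s t
        rw [Matrix.mul_apply, Fin.sum_univ_succ, Matrix.star_apply, hV0s s, star_zero,
          zero_mul, zero_add, Matrix.mul_assoc (star V') (C' i) V', Matrix.mul_apply]
        refine Finset.sum_congr rfl fun r _ => ?_
        rw [Matrix.star_apply, hVss, hNss, Matrix.star_apply]
      rw [hM]
      constructor
      · intro p q hpq
        induction p using Fin.cases with
        | zero =>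
          induction q using Fin.cases with
          | zero => exact absurd rfl hpq
          | succ q => exact hM0t q
        | succ p =>
          induction q using Fin.cases with
          | zero => exact hMs0 p
          | succ q =>
            rw [hMss]
            exact (hV'diag i).1 (fun hh => hpq (by rw [hh]))
      · intro p
        induction p using Fin.cases with
        | zero => rw [hM00]; exact ⟨rfl, rfl⟩
        | succ p =>
          rw [hMss]
          exact (hV'diag i).2 p

end

/-- The compact symplectic group `Sp(m)` (type `C_m`), realized as the group of
`m × m` quaternionic matrices `A` with `A* A = 1`. -/
def SpGroup (m : ℕ) : Type :=
  unitary (Matrix (Fin m) (Fin m) ℍ[ℝ])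

noncomputable instance (m : ℕ) : Group (SpGroup m) :=
  inferInstanceAs (Group (unitary (Matrix (Fin m) (Fin m) ℍ[ℝ])))

/-- `A` belongs to the fixed maximal torus of `Sp(m)`: the underlying matrix is
diagonal and its diagonal entries are complex numbers (quaternions with vanishing
`j`- and `k`-parts) of modulus one. -/
def SpGroup.InTorus {m : ℕ} (A : SpGroup m) : Prop :=
  (A.1 : Matrix (Fin m) (Fin m) ℍ[ℝ]).IsDiag ∧
    ∀ p : Fin m, (A.1 p p).imJ = 0 ∧ (A.1 p p).imK = 0 ∧ ‖A.1 p p‖ = 1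

/-- In the compact symplectic group `G = Sp(m)` (type `C_m`), every finite tuple
of pairwise commuting elements can be simultaneously conjugated into the fixed
maximal torus of diagonal matrices with complex entries of modulus one. -/
theorem sp_commuting_tuple_simultaneously_conjugated_into_torus
    (m n : ℕ) (x : Fin n → SpGroup m)
    (hcomm : ∀ i j, x i * x j = x j * x i) :
    ∃ g : SpGroup m, ∀ i, SpGroup.InTorus (g * x i * g⁻¹) := by
  classical
  obtain ⟨U, hUl, hUr, hdiag⟩ := main_diag n m (fun i => (x i).1)
    (fun i => (Unitary.mem_iff.mp (x i).2).1)
    (fun i => (Unitary.mem_iff.mp (x i).2).2)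
    (fun i j => congrArg Subtype.val (hcomm i j))
  have hmem : star U ∈ unitary (Matrix (Fin m) (Fin m) ℍ[ℝ]) :=
    Unitary.mem_iff.mpr ⟨by rwa [star_star], by rwa [star_star]⟩
  refine ⟨⟨star U, hmem⟩, fun i => ?_⟩
  set g : SpGroup m := ⟨star U, hmem⟩ with hgdef
  have hval : (g * x i * g⁻¹).1 = star U * (x i).1 * U := by
    have h1 : (g⁻¹).1 = U := by
      show star (g.1) = U
      rw [hgdef, star_star]
    calc (g * x i * g⁻¹).1 = g.1 * (x i).1 * (g⁻¹).1 := rfl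
    _ = star U * (x i).1 * U := by rw [h1, hgdef]
  have hd := hdiag i
  constructor
  · rw [hval]; exact hd.1
  · intro p
    have hnorm : ‖(g * x i * g⁻¹).1 p p‖ = 1 := by
      apply diag_entry_norm
      · exact (Unitary.mem_iff.mp (g * x i * g⁻¹).2).1
      · rw [hval]; exact hd.1
    refine ⟨?_, ?_, hnorm⟩
    · rw [hval]; exact ((hd.2) p).1
    · rw [hval]; exact ((hd.2) p).2
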